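/- Let Ω ⊆ ℝⁿ be open, satisfying the ε-ball condition, and fix x₀ ∈ ∂Ω with direction vector d₀ = d_{x₀}. Work in coordinates where x₀ = 0 and d₀ is the last coordinate direction. Then for every x' in the open disk D_ε(0') ⊆ ℝ^{n−1}, the value φ⁺(x') = sup{x_n ∈ [−ε, ε] : (x', x_n) ∈ Ω} lies in (−ε, ε), the point (x', φ⁺(x')) belongs to ∂Ω, and |φ⁺(x')| ≤ ε − √(ε² − ‖x'‖²). -/
import Mathlib


open Metric
open scoped RealInnerProductSpace

/-- Local parametrization from above: in the frame at `x₀ ∈ ∂Ω` (origin `x₀`, last axis `d₀`),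
for every `x'` in the disk of radius `ε` of the hyperplane `d₀^⊥`, the value
`φ⁺(x') = sup {t ∈ [−ε, ε] : x₀ + x' + t d₀ ∈ Ω}` lies in `(−ε, ε)`, the corresponding point
lies on `∂Ω`, and `|φ⁺(x')| ≤ ε − √(ε² − ‖x'‖²)`. -/
theorem stmt_9 {n : ℕ} (hn : 2 ≤ n) (ε : ℝ) (hε : 0 < ε)
    (Ω : Set (EuclideanSpace ℝ (Fin n))) (hΩ : IsOpen Ω)
    (hball : ∀ x ∈ frontier Ω, ∃ d : EuclideanSpace ℝ (Fin n), ‖d‖ = 1 ∧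
      ball (x - ε • d) ε ⊆ Ω ∧ ball (x + ε • d) ε ⊆ (closure Ω)ᶜ)
    (x₀ : EuclideanSpace ℝ (Fin n)) (hx₀ : x₀ ∈ frontier Ω)
    (d₀ : EuclideanSpace ℝ (Fin n)) (hd₀ : ‖d₀‖ = 1)
    (h1 : ball (x₀ - ε • d₀) ε ⊆ Ω) (h2 : ball (x₀ + ε • d₀) ε ⊆ (closure Ω)ᶜ)
    (v : EuclideanSpace ℝ (Fin n)) (hv : ⟪v, d₀⟫ = 0) (hvε : ‖v‖ < ε) :
    sSup {t : ℝ | t ∈ Set.Icc (-ε) ε ∧ x₀ + v + t • d₀ ∈ Ω} ∈ Set.Ioo (-ε) ε ∧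
      x₀ + v + (sSup {t : ℝ | t ∈ Set.Icc (-ε) ε ∧ x₀ + v + t • d₀ ∈ Ω}) • d₀ ∈ frontier Ω ∧
      |sSup {t : ℝ | t ∈ Set.Icc (-ε) ε ∧ x₀ + v + t • d₀ ∈ Ω}|
        ≤ ε - Real.sqrt (ε ^ 2 - ‖v‖ ^ 2) := by
  set S : Set ℝ := {t : ℝ | t ∈ Set.Icc (-ε) ε ∧ x₀ + v + t • d₀ ∈ Ω} with hSdef
  set s : ℝ := Real.sqrt (ε ^ 2 - ‖v‖ ^ 2) with hsdef
  have hv0 : 0 ≤ ‖v‖ := norm_nonneg v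
  have hεv : 0 < ε ^ 2 - ‖v‖ ^ 2 := by nlinarith
  have hs0 : 0 < s := Real.sqrt_pos.mpr hεv
  have hs2 : s ^ 2 = ε ^ 2 - ‖v‖ ^ 2 := Real.sq_sqrt hεv.le
  have hsε : s ≤ ε := by nlinarith
  have hnorm : ∀ a : ℝ, ‖v + a • d₀‖ ^ 2 = ‖v‖ ^ 2 + a ^ 2 := by
    intro a
    rw [norm_add_sq_real, real_inner_smul_right, hv, norm_smul, hd₀]
    simp [sq_abs]
  have hin : ∀ t : ℝ, (t + ε) ^ 2 < ε ^ 2 - ‖v‖ ^ 2 → x₀ + v + t • d₀ ∈ Ω := by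
    intro t ht
    apply h1
    rw [mem_ball, dist_eq_norm]
    have heq : x₀ + v + t • d₀ - (x₀ - ε • d₀) = v + (t + ε) • d₀ := by
      rw [add_smul]; abel
    rw [heq]
    have h2' : ‖v + (t + ε) • d₀‖ ^ 2 < ε ^ 2 := by rw [hnorm]; linarith
    exact lt_of_pow_lt_pow_left₀ 2 hε.le h2'
  have hout : ∀ t : ℝ, (t - ε) ^ 2 < ε ^ 2 - ‖v‖ ^ 2 → x₀ + v + t • d₀ ∉ Ω := by
    intro t ht hmem
    have hb : x₀ + v + t • d₀ ∈ ball (x₀ + ε • d₀) ε := by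
      rw [mem_ball, dist_eq_norm]
      have heq : x₀ + v + t • d₀ - (x₀ + ε • d₀) = v + (t - ε) • d₀ := by
        rw [sub_smul]; abel
      rw [heq]
      have h2' : ‖v + (t - ε) • d₀‖ ^ 2 < ε ^ 2 := by rw [hnorm]; linarith
      exact lt_of_pow_lt_pow_left₀ 2 hε.le h2'
    exact h2 hb (subset_closure hmem)
  have hne : S.Nonempty := ⟨-ε, ⟨le_refl _, by linarith⟩, hin (-ε) (by nlinarith)⟩
  have hbdd : BddAbove S := ⟨ε, fun t ht => ht.1.2⟩
  have hub : sSup S ≤ ε - s := by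
    apply csSup_le hne
    intro t ht
    by_contra hlt
    push_neg at hlt
    have htle : t ≤ ε := ht.1.2
    have h1t : (t - ε) ^ 2 < ε ^ 2 - ‖v‖ ^ 2 := by
      nlinarith [mul_pos (show (0:ℝ) < t - ε + s by linarith)
        (show (0:ℝ) < s - (t - ε) by linarith)]
    exact hout t h1t ht.2
  have hlb : -ε + s ≤ sSup S := by
    by_contra hlt
    push_neg at hlt
    have hε0 : -ε ≤ sSup S := le_csSup hbdd ⟨⟨le_refl _, by linarith⟩, hin (-ε) (by nlinarith)⟩
    obtain ⟨c, hc1, hc2⟩ := exists_between hlt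
    have hcS : c ∈ S := ⟨⟨by linarith, by linarith⟩, hin c (by
      nlinarith [mul_pos (show (0:ℝ) < c + ε by linarith)
        (show (0:ℝ) < s - (c + ε) by linarith)])⟩
    exact absurd (le_csSup hbdd hcS) (not_le.mpr hc1)
  refine ⟨⟨by linarith, by linarith⟩, ?_, abs_le.mpr ⟨by linarith, by linarith⟩⟩
  have hcl : x₀ + v + (sSup S) • d₀ ∈ closure Ω := by
    have hmap : Set.MapsTo (fun t : ℝ => x₀ + v + t • d₀) S Ω := fun t ht => ht.2
    have hcont : Continuous fun t : ℝ => x₀ + v + t • d₀ :=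
      continuous_const.add (continuous_id.smul continuous_const)
    exact map_mem_closure (f := fun t : ℝ => x₀ + v + t • d₀) hcont (csSup_mem_closure hne hbdd) hmap
  have hni : x₀ + v + (sSup S) • d₀ ∉ interior Ω := by
    rw [hΩ.interior_eq]
    intro hmem
    obtain ⟨δ, hδ0, hδ⟩ := Metric.isOpen_iff.mp hΩ _ hmem
    set δ' : ℝ := min (δ / 2) (ε - sSup S) with hδ'def
    have hδ'0 : 0 < δ' := lt_min (by linarith) (by linarith)
    have hmem' : sSup S + δ' ∈ S := by
      refine ⟨⟨by linarith, by have := min_le_right (δ / 2) (ε - sSup S); linarith⟩, ?_⟩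
      apply hδ
      rw [mem_ball, dist_eq_norm]
      have heq : x₀ + v + (sSup S + δ') • d₀ - (x₀ + v + (sSup S) • d₀) = δ' • d₀ := by
        rw [add_smul]; abel
      rw [heq, norm_smul, hd₀, mul_one, Real.norm_eq_abs, abs_of_pos hδ'0]
      have := min_le_left (δ / 2) (ε - sSup S)
      linarith
    have := le_csSup hbdd hmem'
    linarith
  exact ⟨hcl, hni⟩
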